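/- If v, w : ℝ² → ℝ are three times continuously differentiable, then det D²v − det D²w = (1/2) div( (cof D²(v+w)) D(v − w) ). -/

import Mathlib

def cof (A : Matrix (Fin 2) (Fin 2) ℝ) : Matrix (Fin 2) (Fin 2) ℝ :=
  !![A 1 1, -(A 1 0); -(A 0 1), A 0 0]

def frob (A B : Matrix (Fin 2) (Fin 2) ℝ) : ℝ := ∑ i, ∑ j, A i j * B i j

noncomputable def pd (j : Fin 2) (f : EuclideanSpace ℝ (Fin 2) → ℝ)
    (x : EuclideanSpace ℝ (Fin 2)) : ℝ :=
  fderiv ℝ f x (EuclideanSpace.single j 1)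

noncomputable def hess (w : EuclideanSpace ℝ (Fin 2) → ℝ)
    (x : EuclideanSpace ℝ (Fin 2)) : Matrix (Fin 2) (Fin 2) ℝ :=
  fun i j => pd j (pd i w) x

lemma contDiff_pd (n : ℕ) {f : EuclideanSpace ℝ (Fin 2) → ℝ}
    (hf : ContDiff ℝ (n+1) f) (j : Fin 2) : ContDiff ℝ n (pd j f) := by
  have h := hf.fderiv_right (m := n) (by norm_cast)
  exact h.clm_apply contDiff_const

lemma pd_mul {g h : EuclideanSpace ℝ (Fin 2) → ℝ} {x} (i : Fin 2)
    (hg : DifferentiableAt ℝ g x) (hh : DifferentiableAt ℝ h x) :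
    pd i (fun y => g y * h y) x = pd i g x * h x + g x * pd i h x := by
  simp [pd, fderiv_fun_mul hg hh]; ring

lemma pd_sub {g h : EuclideanSpace ℝ (Fin 2) → ℝ} {x} (i : Fin 2)
    (hg : DifferentiableAt ℝ g x) (hh : DifferentiableAt ℝ h x) :
    pd i (fun y => g y - h y) x = pd i g x - pd i h x := by
  simp [pd, fderiv_fun_sub hg hh]

lemma pd_add {g h : EuclideanSpace ℝ (Fin 2) → ℝ} {x} (i : Fin 2)
    (hg : DifferentiableAt ℝ g x) (hh : DifferentiableAt ℝ h x) :
    pd i (fun y => g y + h y) x = pd i g x + pd i h x := by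
  simp [pd, fderiv_fun_add hg hh]

lemma pd_comm {f : EuclideanSpace ℝ (Fin 2) → ℝ} (hf : ContDiff ℝ 2 f)
    (i j : Fin 2) (x : EuclideanSpace ℝ (Fin 2)) :
    pd i (pd j f) x = pd j (pd i f) x := by
  have hd : DifferentiableAt ℝ (fderiv ℝ f) x :=
    ((hf.fderiv_right (m := 1) (by norm_num)).differentiable (by norm_num)) x
  have key : ∀ a b : Fin 2,
      pd a (pd b f) x = fderiv ℝ (fderiv ℝ f) x (EuclideanSpace.single a 1)
        (EuclideanSpace.single b 1) := by
    intro a b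
    have : pd b f = fun y => (fderiv ℝ f y) (EuclideanSpace.single b 1) := rfl
    rw [pd, this, fderiv_clm_apply hd (differentiableAt_const _)]
    simp
  rw [key, key]
  exact (hf.contDiffAt.isSymmSndFDerivAt (by norm_num)) _ _

theorem det_hess_sub_det_hess (v w : EuclideanSpace ℝ (Fin 2) → ℝ)
    (hv : ContDiff ℝ 3 v) (hw : ContDiff ℝ 3 w) (x : EuclideanSpace ℝ (Fin 2)) :
    (hess v x).det - (hess w x).det =
      (1 / 2) * ∑ i, pd i (fun y =>
        ∑ j, cof (hess (fun z => v z + w z) y) i j * (pd j v y - pd j w y)) x := by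
  set u : EuclideanSpace ℝ (Fin 2) → ℝ := fun z => v z + w z with hu_def
  have hu : ContDiff ℝ 3 u := hv.add hw
  -- differentiability helpers
  have D1 : ∀ (f : EuclideanSpace ℝ (Fin 2) → ℝ), ContDiff ℝ 3 f → ∀ j,
      Differentiable ℝ (pd j f) := fun f hf j =>
    (contDiff_pd 2 hf j).differentiable (by norm_num)
  have D2 : ∀ (f : EuclideanSpace ℝ (Fin 2) → ℝ), ContDiff ℝ 3 f → ∀ i j,
      Differentiable ℝ (pd j (pd i f)) := fun f hf i j =>
    (contDiff_pd 1 (contDiff_pd 2 hf i) j).differentiable (by norm_num)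
  have dg : ∀ j : Fin 2, DifferentiableAt ℝ (fun y => pd j v y - pd j w y) x :=
    fun j => ((D1 v hv j x).sub (D1 w hw j x))
  -- function-level symmetry for u
  have hsym : pd 0 (pd 1 u) = pd 1 (pd 0 u) :=
    funext fun y => pd_comm (hu.of_le (by norm_num)) 0 1 y
  -- third derivative swaps
  have t1 : pd 0 (pd 1 (pd 1 u)) x = pd 1 (pd 1 (pd 0 u)) x := by
    rw [pd_comm (contDiff_pd 2 hu 1) 0 1 x, hsym]
  have t2 : pd 0 (pd 0 (pd 1 u)) x = pd 1 (pd 0 (pd 0 u)) x := by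
    rw [hsym]; exact pd_comm (contDiff_pd 2 hu 0) 0 1 x
  -- hess of u in terms of v, w
  have hupd : ∀ i : Fin 2, pd i u = fun y => pd i v y + pd i w y := by
    intro i; funext y
    exact pd_add i (hv.differentiable (by norm_num) y) (hw.differentiable (by norm_num) y)
  have huij : ∀ i j : Fin 2, pd j (pd i u) x = pd j (pd i v) x + pd j (pd i w) x := by
    intro i j; rw [hupd i]
    exact pd_add j (D1 v hv i x) (D1 w hw i x)
  -- second derivative symmetry for v, w
  have sv : pd 1 (pd 0 v) x = pd 0 (pd 1 v) x := pd_comm (hv.of_le (by norm_num)) 1 0 x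
  have sw : pd 1 (pd 0 w) x = pd 0 (pd 1 w) x := pd_comm (hw.of_le (by norm_num)) 1 0 x
  -- rewrite the two summand functions explicitly
  have hf0 : (fun y => ∑ j, cof (hess u y) 0 j * (pd j v y - pd j w y)) =
      fun y => pd 1 (pd 1 u) y * (pd 0 v y - pd 0 w y) -
        pd 0 (pd 1 u) y * (pd 1 v y - pd 1 w y) := by
    funext y; simp [cof, hess, Fin.sum_univ_two]; ring
  have hf1 : (fun y => ∑ j, cof (hess u y) 1 j * (pd j v y - pd j w y)) =
      fun y => pd 0 (pd 0 u) y * (pd 1 v y - pd 1 w y) -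
        pd 1 (pd 0 u) y * (pd 0 v y - pd 0 w y) := by
    funext y; simp [cof, hess, Fin.sum_univ_two]; ring
  rw [Fin.sum_univ_two, hf0, hf1]
  rw [pd_sub 0 ((D2 u hu 1 1 x).fun_mul (dg 0)) ((D2 u hu 1 0 x).fun_mul (dg 1)),
      pd_sub 1 ((D2 u hu 0 0 x).fun_mul (dg 1)) ((D2 u hu 0 1 x).fun_mul (dg 0)),
      pd_mul 0 (D2 u hu 1 1 x) (dg 0), pd_mul 0 (D2 u hu 1 0 x) (dg 1),
      pd_mul 1 (D2 u hu 0 0 x) (dg 1), pd_mul 1 (D2 u hu 0 1 x) (dg 0),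
      pd_sub 0 (D1 v hv 0 x) (D1 w hw 0 x), pd_sub 0 (D1 v hv 1 x) (D1 w hw 1 x),
      pd_sub 1 (D1 v hv 0 x) (D1 w hw 0 x), pd_sub 1 (D1 v hv 1 x) (D1 w hw 1 x)]
  rw [t1, t2, huij 0 0, huij 0 1, huij 1 0, huij 1 1]
  simp only [Matrix.det_fin_two, hess]
  rw [sv, sw]
  ring
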